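/- A polynomial E in the variables y^j_{(a)} (a = 1,…,N, j = 1,…,n, over ℝ) is admissible — i.e. for every a and j the partial derivative ∂E/∂y^j_{(a)} has weighted order at most a, where y^j_{(b)} carries weight b — if and only if E has the form E(y) = C + Σ_{a=1}^{N} ( λ_{(a)i} y^i_{(a)} + (1/2) κ_{(a)ij} y^i_{(a)} y^j_{(a)} ) for a constant C, constant vectors λ_{(a)}, and constant symmetric matrices κ_{(a)}. In other words, an admissible internal energy contains no cross terms between different modes and is at most quadratic in each mode's variables. -/

import Mathlib

open MvPolynomial

/-- Characterization of admissible internal energies: a polynomial `E` in the variables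
`y^j_{(a)}`, `a = 1,…,N`, `j = 1,…,n` (variable `(a,j)` of weight `a`) is admissible
— every `∂E/∂y^j_{(a)}` has weighted order at most `a` — if and only if
`E = C + Σ_{a=1}^{N} ( λ_{(a)i} y^i_{(a)} + (1/2) κ_{(a)ij} y^i_{(a)} y^j_{(a)} )`
for a constant `C`, constant vectors `λ_{(a)}`, and symmetric matrices `κ_{(a)}`:
no cross terms between different modes and at most quadratic in each mode. -/

lemma coeff_pderiv' {σ : Type*} [DecidableEq σ] (v : σ) (m : σ →₀ ℕ) (p : MvPolynomial σ ℝ) :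
    coeff m (pderiv v p) = (m v + 1 : ℝ) * coeff (m + Finsupp.single v 1) p := by
  induction p using MvPolynomial.induction_on' with
  | monomial u a =>
    rw [pderiv_monomial, coeff_monomial, coeff_monomial]
    by_cases h : u = m + Finsupp.single v 1
    · subst h
      have h1 : m + Finsupp.single v 1 - Finsupp.single v 1 = m := by
        ext x
        simp only [Finsupp.tsub_apply, Finsupp.add_apply, Finsupp.single_apply]
        omega
      have h2 : ((m + Finsupp.single v 1 : σ →₀ ℕ)) v = m v + 1 := by simp
      rw [if_pos h1, h2, if_pos rfl]
      push_cast; ring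
    · rw [if_neg h]
      by_cases h2 : u - Finsupp.single v 1 = m
      · rw [if_pos h2]
        have happ : ∀ x, u x - (Finsupp.single v 1) x = m x := fun x => by
          rw [← Finsupp.tsub_apply, h2]
        have huv : u v = 0 := by
          by_contra hv
          apply h
          ext x
          have := happ x
          simp only [Finsupp.add_apply, Finsupp.single_apply] at this ⊢
          by_cases hx : v = x
          · subst hx; simp at this ⊢; omega
          · simp [hx] at this ⊢; omega
        simp [huv]
      · rw [if_neg h2, mul_zero]
  | add p q hp hq => simp [hp, hq, mul_add]

lemma degree_add'' {α : Type*} (f g : α →₀ ℕ) :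
    Finsupp.degree (f + g) = Finsupp.degree f + Finsupp.degree g := by
  simp [Finsupp.degree_eq_weight_one, map_add]

lemma degree_single'' {α : Type*} (u : α) : Finsupp.degree (Finsupp.single u 1) = 1 := by
  simp [Finsupp.degree_apply, Finsupp.support_single_ne_zero u one_ne_zero]

lemma exists_sub_single {α : Type*} (m : α →₀ ℕ) (u : α) (hu : m u ≠ 0) :
    ∃ m' : α →₀ ℕ, m = m' + Finsupp.single u 1 ∧ Finsupp.degree m = Finsupp.degree m' + 1 := by
  classical
  refine ⟨m - Finsupp.single u 1, ?_, ?_⟩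
  · ext x
    simp only [Finsupp.add_apply, Finsupp.tsub_apply, Finsupp.single_apply]
    by_cases hx : u = x
    · subst hx; simp; omega
    · simp [hx]
  · have h : m = (m - Finsupp.single u 1) + Finsupp.single u 1 := by
      ext x
      simp only [Finsupp.add_apply, Finsupp.tsub_apply, Finsupp.single_apply]
      by_cases hx : u = x
      · subst hx; simp; omega
      · simp [hx]
    conv_lhs => rw [h]
    rw [degree_add'', degree_single'']

lemma two_class {α : Type*} (m : α →₀ ℕ) (h : Finsupp.degree m ≤ 2) :
    m = 0 ∨ (∃ u, m = Finsupp.single u 1) ∨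
      ∃ u v, m = Finsupp.single u 1 + Finsupp.single v 1 := by
  classical
  rcases eq_or_ne m 0 with h0 | h0
  · exact Or.inl h0
  obtain ⟨u, hu⟩ : ∃ u, m u ≠ 0 := by
    by_contra hc
    push_neg at hc
    exact h0 (Finsupp.ext fun x => hc x)
  obtain ⟨m1, hm1, hd1⟩ := exists_sub_single m u hu
  rcases eq_or_ne m1 0 with h1 | h1
  · exact Or.inr (Or.inl ⟨u, by rw [hm1, h1, zero_add]⟩)
  obtain ⟨w, hw⟩ : ∃ w, m1 w ≠ 0 := by
    by_contra hc
    push_neg at hc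
    exact h1 (Finsupp.ext fun x => hc x)
  obtain ⟨m2, hm2, hd2⟩ := exists_sub_single m1 w hw
  have h2 : Finsupp.degree m2 = 0 := by omega
  rw [Finsupp.degree_eq_zero_iff] at h2
  exact Or.inr (Or.inr ⟨w, u, by rw [hm1, hm2, h2, zero_add]⟩)

lemma weight_single'' {α : Type*} (w : α → ℕ) (u : α) :
    Finsupp.weight w (Finsupp.single u 1) = w u := by
  rw [Finsupp.weight_apply, Finsupp.sum_single_index] <;> simp

lemma star_iff (n N : ℕ) (E : MvPolynomial (ℕ × Fin n) ℝ) :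
    (∀ (a : ℕ) (j : Fin n),
        weightedTotalDegree (fun v : ℕ × Fin n => v.1) (pderiv (a, j) E) ≤ a)
      ↔ ∀ m ∈ E.support, ∀ v : ℕ × Fin n, m v ≠ 0 →
          Finsupp.weight (fun v : ℕ × Fin n => v.1) m ≤ v.1 + v.1 := by
  classical
  set w : ℕ × Fin n → ℕ := fun v => v.1 with hw
  constructor
  · intro H m hm v hv
    obtain ⟨m', hm', hd⟩ := exists_sub_single m v hv
    have hcoeff : coeff m' (pderiv v E) ≠ 0 := by
      rw [coeff_pderiv', ← hm']
      have hv' : ((m' v : ℝ) + 1) ≠ 0 := by positivity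
      exact mul_ne_zero hv' (MvPolynomial.mem_support_iff.mp hm)
    have hsup : Finsupp.weight w m' ≤ v.1 := by
      have := H v.1 v.2 
      rw [weightedTotalDegree] at this
      exact le_trans (Finset.le_sup (MvPolynomial.mem_support_iff.mpr hcoeff)) this
    have : Finsupp.weight w m = Finsupp.weight w m' + v.1 := by
      rw [hm', map_add, weight_single'']
    omega
  · intro H a j
    rw [weightedTotalDegree]
    apply Finset.sup_le
    intro m' hm'
    have hcoeff := MvPolynomial.mem_support_iff.mp hm'
    rw [coeff_pderiv'] at hcoeff
    have hmem : m' + Finsupp.single (a, j) 1 ∈ E.support :=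
      MvPolynomial.mem_support_iff.mpr (right_ne_zero_of_mul hcoeff)
    have hv : (m' + Finsupp.single (a, j) 1 : (ℕ × Fin n) →₀ ℕ) (a, j) ≠ 0 := by simp
    have := H _ hmem (a, j) hv
    rw [map_add, weight_single''] at this
    simp only [hw] at this ⊢
    omega

lemma classify (n N : ℕ) (E : MvPolynomial (ℕ × Fin n) ℝ)
    (hvars : ∀ m ∈ E.support, ∀ v ∈ m.support, 1 ≤ v.1 ∧ v.1 ≤ N)
    (hstar : ∀ m ∈ E.support, ∀ v : ℕ × Fin n, m v ≠ 0 →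
        Finsupp.weight (fun v : ℕ × Fin n => v.1) m ≤ v.1 + v.1) :
    ∀ m ∈ E.support, m = 0 ∨
      (∃ (a : ℕ) (i : Fin n), 1 ≤ a ∧ a ≤ N ∧ m = Finsupp.single (a, i) 1) ∨
      (∃ (a : ℕ) (i j : Fin n), 1 ≤ a ∧ a ≤ N ∧
        m = Finsupp.single (a, i) 1 + Finsupp.single (a, j) 1) := by
  classical
  intro m hm
  rcases eq_or_ne m 0 with h0 | h0
  · exact Or.inl h0
  right
  set w : ℕ × Fin n → ℕ := fun v => v.1 with hwdef
  obtain ⟨v0, hv0mem, hv0min⟩ :=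
    Finset.exists_min_image m.support Prod.fst (Finsupp.support_nonempty_iff.mpr h0)
  have hv0 : m v0 ≠ 0 := Finsupp.mem_support_iff.mp hv0mem
  have hv0w : 1 ≤ v0.1 := (hvars m hm v0 hv0mem).1
  have hlow : Finsupp.degree m * v0.1 ≤ Finsupp.weight w m := by
    rw [Finsupp.weight_apply, Finsupp.sum, Finsupp.degree_apply, Finset.sum_mul]
    apply Finset.sum_le_sum
    intro v hv
    have := hv0min v hv
    calc m v * v0.1 ≤ m v * v.1 := Nat.mul_le_mul_left _ this
    _ = m v • w v := rfl
  have hup := hstar m hm v0 hv0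
  have hdeg : Finsupp.degree m ≤ 2 := by
    have h2 : Finsupp.degree m * v0.1 ≤ 2 * v0.1 := by omega
    exact Nat.le_of_mul_le_mul_right h2 (by omega)
  rcases two_class m hdeg with h | ⟨u, hu⟩ | ⟨u, v, huv⟩
  · exact absurd h h0
  · left
    have humem : u ∈ m.support := by
      rw [Finsupp.mem_support_iff, hu, Finsupp.single_eq_same]; exact one_ne_zero
    obtain ⟨hu1, hu2⟩ := hvars m hm u humem
    obtain ⟨a, i⟩ := u
    exact ⟨a, i, hu1, hu2, hu⟩
  · right
    have hmu : m u ≠ 0 := by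
      rw [huv]; simp [Finsupp.single_apply]
    have hmv : m v ≠ 0 := by
      rw [huv]; simp [Finsupp.single_apply]
    have hwm : Finsupp.weight w m = u.1 + v.1 := by
      rw [huv, map_add, weight_single'', weight_single'']
    have h1 := hstar m hm u hmu
    have h2 := hstar m hm v hmv
    have heq : u.1 = v.1 := by rw [hwm] at h1 h2; omega
    have humem : u ∈ m.support := Finsupp.mem_support_iff.mpr hmu
    obtain ⟨ha1, ha2⟩ := hvars m hm u humem
    obtain ⟨a, i⟩ := u
    obtain ⟨b, j⟩ := v
    have hab : a = b := heq
    subst hab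
    exact ⟨a, i, j, ha1, ha2, huv⟩

lemma pair_eq_pair {α : Type*} [DecidableEq α] {u v u' v' : α}
    (h : Finsupp.single u 1 + Finsupp.single v 1
        = Finsupp.single u' 1 + Finsupp.single v' 1) :
    (u = u' ∧ v = v') ∨ (u = v' ∧ v = u') := by
  have happ : ∀ x, (if u = x then (1:ℕ) else 0) + (if v = x then (1:ℕ) else 0)
      = (if u' = x then (1:ℕ) else 0) + (if v' = x then (1:ℕ) else 0) := by
    intro x
    have := DFunLike.congr_fun h x
    simpa [Finsupp.add_apply, Finsupp.single_apply] using this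
  by_cases huu' : u = u'
  · subst huu'
    left
    refine ⟨rfl, ?_⟩
    by_contra hc
    have h4 := happ v'
    rw [if_pos rfl, if_neg hc] at h4
    split_ifs at h4 <;> omega
  · right
    have h1 := happ u
    rw [if_pos rfl, if_neg (fun h : u' = u => huu' h.symm)] at h1
    have hv'u : v' = u := by
      by_contra hc
      rw [if_neg hc] at h1
      split_ifs at h1 <;> omega
    have h2 := happ u'
    rw [if_pos rfl, if_neg huu'] at h2
    have hvu' : v = u' := by
      by_contra hc
      rw [if_neg hc] at h2
      split_ifs at h2 <;> omega
    exact ⟨hv'u.symm, hvu'⟩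

lemma single_ne_zero'' {α : Type*} (u : α) : Finsupp.single u 1 ≠ (0 : α →₀ ℕ) := by
  intro h
  have := congrArg Finsupp.degree h
  rw [degree_single'', map_zero] at this
  exact one_ne_zero this

lemma pair_ne_zero'' {α : Type*} (u v : α) :
    Finsupp.single u 1 + Finsupp.single v 1 ≠ (0 : α →₀ ℕ) := by
  intro h
  have := congrArg Finsupp.degree h
  rw [degree_add'', degree_single'', degree_single'', map_zero] at this
  omega

lemma pair_ne_single'' {α : Type*} (u v w : α) :
    Finsupp.single u 1 + Finsupp.single v 1 ≠ Finsupp.single w 1 := by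
  intro h
  have := congrArg Finsupp.degree h
  rw [degree_add'', degree_single'', degree_single'', degree_single''] at this
  omega

lemma coeff_CXX {σ : Type*} [DecidableEq σ] (m : σ →₀ ℕ) (k : ℝ) (u v : σ) :
    coeff m (C k * X u * X v : MvPolynomial σ ℝ)
      = if Finsupp.single u 1 + Finsupp.single v 1 = m then k else 0 := by
  classical
  have hX : (C k * X u * X v : MvPolynomial σ ℝ)
      = monomial (Finsupp.single u 1 + Finsupp.single v 1) k := by
    rw [C_apply, X, X, monomial_mul, monomial_mul]
    simp [add_comm]
  rw [hX, coeff_monomial]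

lemma zero_ne_single'' {α : Type*} (u : α) : (0 : α →₀ ℕ) ≠ Finsupp.single u 1 :=
  fun h => single_ne_zero'' u h.symm

lemma zero_ne_pair'' {α : Type*} (u v : α) :
    (0 : α →₀ ℕ) ≠ Finsupp.single u 1 + Finsupp.single v 1 :=
  fun h => pair_ne_zero'' u v h.symm

lemma single_ne_pair'' {α : Type*} (u v w : α) :
    Finsupp.single w 1 ≠ Finsupp.single u 1 + Finsupp.single v 1 :=
  fun h => pair_ne_single'' u v w h.symm

lemma pair_eq_pair_iff {α : Type*} [DecidableEq α] {u v u' v' : α} :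
    Finsupp.single u 1 + Finsupp.single v 1 = Finsupp.single u' 1 + Finsupp.single v' 1
      ↔ (u = u' ∧ v = v') ∨ (u = v' ∧ v = u') := by
  constructor
  · exact pair_eq_pair
  · rintro (⟨rfl, rfl⟩ | ⟨rfl, rfl⟩)
    · rfl
    · rw [add_comm]

lemma single_eq_single_iff'' {α : Type*} [DecidableEq α] {u v : α} :
    Finsupp.single u 1 = Finsupp.single v 1 ↔ u = v :=
  Finsupp.single_left_inj one_ne_zero

theorem admissible_iff_linear_quadratic_no_cross_terms
    (n N : ℕ) (E : MvPolynomial (ℕ × Fin n) ℝ)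
    (hvars : ∀ m ∈ E.support, ∀ v ∈ m.support, 1 ≤ v.1 ∧ v.1 ≤ N) :
    (∀ (a : ℕ) (j : Fin n),
        weightedTotalDegree (fun v : ℕ × Fin n => v.1) (pderiv (a, j) E) ≤ a)
      ↔ ∃ (c : ℝ) (lam : ℕ → Fin n → ℝ) (kap : ℕ → Fin n → Fin n → ℝ),
          (∀ a i j, kap a i j = kap a j i) ∧
          E = C c + ∑ a ∈ Finset.Icc 1 N,
            ((∑ i : Fin n, C (lam a i) * X (a, i)) +
              (1 / 2 : ℝ) •
                ∑ i : Fin n, ∑ j : Fin n, C (kap a i j) * X (a, i) * X (a, j)) := by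
  classical
  rw [star_iff n N E]
  constructor
  · intro hstar
    have hclass := classify n N E hvars hstar
    refine ⟨coeff 0 E, fun a i => coeff (Finsupp.single (a, i) 1) E,
      fun a i j => (if i = j then 2 else 1) *
        coeff (Finsupp.single (a, i) 1 + Finsupp.single (a, j) 1) E, ?_, ?_⟩
    · intro a i j
      dsimp only
      by_cases hij : i = j
      · subst hij; rfl
      · rw [if_neg hij, if_neg (Ne.symm hij), add_comm (Finsupp.single (a, i) 1)]
    · apply MvPolynomial.ext
      intro m
      simp only [coeff_add, coeff_C, coeff_sum, coeff_smul, coeff_C_mul, coeff_X', coeff_CXX,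
        smul_eq_mul, mul_ite, mul_one, mul_zero]
      by_cases hm : m ∈ E.support
      · rcases hclass m hm with h0 | ⟨b, k, hb1, hb2, hs⟩ | ⟨b, k, l, hb1, hb2, hs⟩
        · -- m = 0
          subst h0
          simp [single_ne_zero'', pair_ne_zero'']
        · -- m = single (b,k) 1
          subst hs
          rw [if_neg (zero_ne_single'' _), zero_add]
          have hsummand : ∀ x ∈ Finset.Icc 1 N,
              ((∑ x1 : Fin n, if (Finsupp.single (x, x1) 1 : (ℕ × Fin n) →₀ ℕ)
                    = Finsupp.single (b, k) 1
                  then coeff (Finsupp.single (x, x1) 1) E else 0) +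
                1 / 2 * ∑ x1 : Fin n, ∑ x2 : Fin n,
                  if (Finsupp.single (x, x1) 1 + Finsupp.single (x, x2) 1 : (ℕ × Fin n) →₀ ℕ)
                      = Finsupp.single (b, k) 1
                  then (if x1 = x2 then 2 else 1) *
                    coeff (Finsupp.single (x, x1) 1 + Finsupp.single (x, x2) 1) E
                  else 0)
              = if x = b then coeff (Finsupp.single ((b : ℕ), k) 1) E else 0 := by
            intro x _
            have hq : (∑ x1 : Fin n, ∑ x2 : Fin n,
                if (Finsupp.single (x, x1) 1 + Finsupp.single (x, x2) 1 : (ℕ × Fin n) →₀ ℕ)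
                    = Finsupp.single (b, k) 1
                then (if x1 = x2 then 2 else 1) *
                  coeff (Finsupp.single (x, x1) 1 + Finsupp.single (x, x2) 1) E
                else 0) = 0 :=
              Finset.sum_eq_zero fun x1 _ =>
                Finset.sum_eq_zero fun x2 _ => if_neg (pair_ne_single'' _ _ _)
            rw [hq, mul_zero, add_zero]
            by_cases hxb : x = b
            · subst hxb
              rw [if_pos rfl]
              have hcong : ∀ x1 : Fin n,
                  (if (Finsupp.single (x, x1) 1 : (ℕ × Fin n) →₀ ℕ) = Finsupp.single (x, k) 1
                    then coeff (Finsupp.single (x, x1) 1) E else 0)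
                  = if x1 = k then coeff (Finsupp.single (x, x1) 1) E else 0 := by
                intro x1
                refine if_congr ?_ rfl rfl
                rw [single_eq_single_iff'', Prod.mk.injEq]
                simp
              rw [Finset.sum_congr rfl fun x1 _ => hcong x1, Finset.sum_ite_eq' Finset.univ k]
              simp
            · rw [if_neg hxb]
              refine Finset.sum_eq_zero fun x1 _ => if_neg fun hc => ?_
              rw [single_eq_single_iff'', Prod.mk.injEq] at hc
              exact hxb hc.1
          rw [Finset.sum_congr rfl hsummand, Finset.sum_ite_eq' (Finset.Icc 1 N) b,
            if_pos (Finset.mem_Icc.mpr ⟨hb1, hb2⟩)]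
        · -- m = single (b,k) 1 + single (b,l) 1
          subst hs
          rw [if_neg (zero_ne_pair'' _ _), zero_add]
          set mm : (ℕ × Fin n) →₀ ℕ := Finsupp.single (b, k) 1 + Finsupp.single (b, l) 1 with hmm
          have hsummand : ∀ x ∈ Finset.Icc 1 N,
              ((∑ x1 : Fin n, if (Finsupp.single (x, x1) 1 : (ℕ × Fin n) →₀ ℕ) = mm
                  then coeff (Finsupp.single (x, x1) 1) E else 0) +
                1 / 2 * ∑ x1 : Fin n, ∑ x2 : Fin n,
                  if (Finsupp.single (x, x1) 1 + Finsupp.single (x, x2) 1 : (ℕ × Fin n) →₀ ℕ) = mm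
                  then (if x1 = x2 then 2 else 1) *
                    coeff (Finsupp.single (x, x1) 1 + Finsupp.single (x, x2) 1) E
                  else 0)
              = if x = b then coeff mm E else 0 := by
            intro x _
            have hlin : (∑ x1 : Fin n,
                if (Finsupp.single (x, x1) 1 : (ℕ × Fin n) →₀ ℕ) = mm
                then coeff (Finsupp.single (x, x1) 1) E else 0) = 0 :=
              Finset.sum_eq_zero fun x1 _ => if_neg (single_ne_pair'' _ _ _)
            rw [hlin, zero_add]
            by_cases hxb : x = b
            · subst hxb
              rw [if_pos rfl]
              rw [← Finset.sum_product']
              have hsub : (∑ p ∈ (Finset.univ ×ˢ Finset.univ : Finset (Fin n × Fin n)),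
                  (if (Finsupp.single (x, p.1) 1 + Finsupp.single (x, p.2) 1 :
                        (ℕ × Fin n) →₀ ℕ) = mm
                    then (if p.1 = p.2 then 2 else 1) *
                      coeff (Finsupp.single (x, p.1) 1 + Finsupp.single (x, p.2) 1) E
                    else 0))
                  = ∑ p ∈ ({(k, l), (l, k)} : Finset (Fin n × Fin n)),
                    (if (Finsupp.single (x, p.1) 1 + Finsupp.single (x, p.2) 1 :
                        (ℕ × Fin n) →₀ ℕ) = mm
                    then (if p.1 = p.2 then 2 else 1) *
                      coeff (Finsupp.single (x, p.1) 1 + Finsupp.single (x, p.2) 1) E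
                    else 0) := by
                refine (Finset.sum_subset (Finset.subset_univ _ |>.trans
                  (by rw [Finset.univ_product_univ])) ?_).symm
                intro p _ hp
                refine if_neg fun hc => hp ?_
                rcases pair_eq_pair hc with ⟨h1, h2⟩ | ⟨h1, h2⟩
                · have e1 : p.1 = k := congrArg Prod.snd h1
                  have e2 : p.2 = l := congrArg Prod.snd h2
                  simp [Finset.mem_insert, Prod.ext_iff, e1, e2]
                · have e1 : p.1 = l := congrArg Prod.snd h1
                  have e2 : p.2 = k := congrArg Prod.snd h2
                  simp [Finset.mem_insert, Prod.ext_iff, e1, e2]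
              rw [hsub]
              by_cases hkl : k = l
              · subst hkl
                rw [Finset.pair_eq_singleton, Finset.sum_singleton]
                rw [if_pos rfl, if_pos rfl]
                ring
              · rw [Finset.sum_pair (fun h => hkl (congrArg Prod.fst h))]
                have hc2 : (Finsupp.single ((x : ℕ), l) 1 + Finsupp.single (x, k) 1 :
                    (ℕ × Fin n) →₀ ℕ) = mm := by rw [hmm, add_comm]
                rw [if_pos rfl, if_pos hc2, if_neg hkl, if_neg (Ne.symm hkl)]
                rw [hc2]
                ring
            · rw [if_neg hxb]
              have hq : (∑ x1 : Fin n, ∑ x2 : Fin n,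
                  if (Finsupp.single (x, x1) 1 + Finsupp.single (x, x2) 1 :
                      (ℕ × Fin n) →₀ ℕ) = mm
                  then (if x1 = x2 then 2 else 1) *
                    coeff (Finsupp.single (x, x1) 1 + Finsupp.single (x, x2) 1) E
                  else 0) = 0 := by
                refine Finset.sum_eq_zero fun x1 _ => Finset.sum_eq_zero fun x2 _ =>
                  if_neg fun hc => ?_
                rcases pair_eq_pair hc with ⟨h1, _⟩ | ⟨h1, _⟩ <;>
                  exact hxb (congrArg Prod.fst h1)
              rw [hq, mul_zero]
          rw [Finset.sum_congr rfl hsummand, Finset.sum_ite_eq' (Finset.Icc 1 N) b,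
            if_pos (Finset.mem_Icc.mpr ⟨hb1, hb2⟩)]
      · -- m not in support
        have hc0 : coeff m E = 0 := MvPolynomial.notMem_support_iff.mp hm
        rw [hc0]
        have hδ : (if 0 = m then coeff 0 E else 0) = 0 := by
          split_ifs with h
          · subst h; exact hc0
          · rfl
        rw [hδ, zero_add]
        refine (Finset.sum_eq_zero fun x _ => ?_).symm
        have hlin : (∑ x1 : Fin n,
            if (Finsupp.single (x, x1) 1 : (ℕ × Fin n) →₀ ℕ) = m
            then coeff (Finsupp.single (x, x1) 1) E else 0) = 0 := by
          refine Finset.sum_eq_zero fun x1 _ => ?_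
          split_ifs with h
          · subst h; exact hc0
          · rfl
        have hq : (∑ x1 : Fin n, ∑ x2 : Fin n,
            if (Finsupp.single (x, x1) 1 + Finsupp.single (x, x2) 1 : (ℕ × Fin n) →₀ ℕ) = m
            then (if x1 = x2 then 2 else 1) *
              coeff (Finsupp.single (x, x1) 1 + Finsupp.single (x, x2) 1) E
            else 0) = 0 := by
          refine Finset.sum_eq_zero fun x1 _ => Finset.sum_eq_zero fun x2 _ => ?_
          split_ifs with h h2
          · rw [h]; rw [hc0]; ring
          · rw [h]; rw [hc0]; ring
          · rfl
        rw [hlin, hq, mul_zero, add_zero]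
  · rintro ⟨c, lam, kap, hsym, hE⟩
    intro m hm v hv
    have hm0 : m ≠ 0 := by intro h; apply hv; rw [h]; rfl
    rw [hE] at hm
    rcases Finset.mem_union.mp (MvPolynomial.support_add hm) with h1 | h1
    · exfalso
      apply hm0
      rw [C_apply] at h1
      simpa using support_monomial_subset h1
    · obtain ⟨a, _, hmem⟩ := Finset.mem_biUnion.mp (MvPolynomial.support_sum h1)
      rcases Finset.mem_union.mp (MvPolynomial.support_add hmem) with h2 | h2
      · obtain ⟨i, _, hmem2⟩ := Finset.mem_biUnion.mp (MvPolynomial.support_sum h2)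
        rw [C_mul_X_eq_monomial] at hmem2
        have hms : m = Finsupp.single (a, i) 1 := by
          simpa using support_monomial_subset hmem2
        have hva : v = (a, i) := by
          rw [hms, Finsupp.single_apply] at hv
          by_contra hc2
          rw [if_neg fun h => hc2 h.symm] at hv
          exact hv rfl
        rw [hms, weight_single'', hva]
        simp
      · obtain ⟨i, _, hmem2⟩ :=
          Finset.mem_biUnion.mp (MvPolynomial.support_sum (MvPolynomial.support_smul h2))
        obtain ⟨j, _, hmem3⟩ := Finset.mem_biUnion.mp (MvPolynomial.support_sum hmem2)
        have hCXX : (C (kap a i j) * X (a, i) * X (a, j) : MvPolynomial (ℕ × Fin n) ℝ)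
            = monomial (Finsupp.single (a, i) 1 + Finsupp.single (a, j) 1) (kap a i j) := by
          rw [C_mul_X_eq_monomial, X, monomial_mul, mul_one]
        rw [hCXX] at hmem3
        have hms : m = Finsupp.single (a, i) 1 + Finsupp.single (a, j) 1 := by
          simpa using support_monomial_subset hmem3
        have hw : Finsupp.weight (fun v : ℕ × Fin n => v.1) m = a + a := by
          rw [hms, map_add, weight_single'', weight_single'']
        have hva : v = (a, i) ∨ v = (a, j) := by
          rw [hms] at hv
          simp only [Finsupp.add_apply, Finsupp.single_apply] at hv
          by_contra hc2
          push_neg at hc2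
          rw [if_neg fun h => hc2.1 h.symm, if_neg fun h => hc2.2 h.symm] at hv
          exact hv rfl
        rcases hva with rfl | rfl <;> rw [hw] <;> simp
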